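/- Consider a directed n-cycle (n ≥ 4) with nonzero edge weights, where nodes 1,…,k are excited and nodes k+1,…,n are measured (2 ≤ k ≤ n-2), and no node is both excited and measured. Then the observed matrix M = C T B (rows k+1,…,n, columns 1,…,k of T = (I-G)^{-1}) does not determine the edge weights: there exist two cycle matrices G, G' with nonzero edge weights and the same observed matrix M but with g_k ≠ g'_k (the edge k → k+1 differs). Concretely, for any nonzero scalar λ ≠ 1 one can scale g_k and g_n appropriately to preserve M while changing g_k. -/

import Mathlib

/-- The `n × n` network matrix of a directed `n`-cycle: entry `(i+1 mod n, i)` is `g i`. -/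
def cycleMatrix {n : ℕ} [NeZero n] (g : Fin n → ℝ) : Matrix (Fin n) (Fin n) ℝ :=
  Matrix.of fun i j => if i = j + 1 then g j else 0

namespace CycleAux

open scoped Fin.NatCast Fin.CommRing

variable {n : ℕ} [NeZero n]

/-- Weight of the directed path from `j` to `i` around the cycle. -/
noncomputable def W (g : Fin n → ℝ) (i j : Fin n) : ℝ :=
  ∏ l ∈ Finset.range ((i - j).val), g (j + (l : Fin n))

/-- Candidate inverse of `1 - cycleMatrix g`. -/
noncomputable def T (g : Fin n → ℝ) : Matrix (Fin n) (Fin n) ℝ :=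
  Matrix.of fun i j => W g i j / (1 - ∏ m, g m)

lemma val_sub_one (h2 : 2 ≤ n) (x : Fin n) (hx : x ≠ 0) : (x - 1).val = x.val - 1 := by
  have hx' : x.val ≠ 0 := fun h => hx (Fin.ext h)
  have h1 : ((1 : Fin n) : ℕ) = 1 := by
    rw [show (1 : Fin n) = ((1:ℕ) : Fin n) by norm_cast, Fin.val_natCast,
      Nat.mod_eq_of_lt (by omega)]
  rw [Fin.sub_def]
  simp only [h1]
  have hlt : x.val < n := x.isLt
  have : n - 1 + x.val = (x.val - 1) + n := by omega
  rw [this, Nat.add_mod_right, Nat.mod_eq_of_lt (by omega)]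

lemma neg_one_cast (h2 : 2 ≤ n) : (((n - 1 : ℕ)) : Fin n) = (-1 : Fin n) := by
  have : (((n - 1 : ℕ)) : Fin n) + 1 = 0 := by
    have h : (((n - 1 : ℕ)) : Fin n) + 1 = (((n - 1) + 1 : ℕ) : Fin n) := by push_cast; ring
    rw [h, show (n - 1) + 1 = n by omega, Fin.natCast_self]
  linear_combination this

lemma neg_one_val (h2 : 2 ≤ n) : ((-1 : Fin n)).val = n - 1 := by
  rw [← neg_one_cast h2, Fin.val_natCast, Nat.mod_eq_of_lt (by omega)]

lemma w_succ (g : Fin n → ℝ) (h2 : 2 ≤ n) (i j : Fin n) (hij : i ≠ j) :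
    W g i j = g (i - 1) * W g (i - 1) j := by
  have hx : i - j ≠ 0 := sub_ne_zero.mpr hij
  have hx1 : (i - j).val ≠ 0 := fun h => hx (Fin.ext h)
  have hd : (i - 1 - j).val = (i - j).val - 1 := by
    rw [show i - 1 - j = (i - j) - 1 by ring, val_sub_one h2 _ hx]
  unfold W
  rw [hd]
  set d := (i - j).val - 1 with hdd
  have h1 : (i - j).val = d + 1 := by omega
  rw [h1, Finset.prod_range_succ]
  have h2' : ((d : ℕ) : Fin n) = i - 1 - j := by
    rw [show d = (i - 1 - j).val by rw [hd], Fin.cast_val_eq_self]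
  rw [h2', show j + (i - 1 - j) = i - 1 by ring]
  ring

lemma w_cycle (g : Fin n → ℝ) (h2 : 2 ≤ n) (j : Fin n) :
    g (j - 1) * W g (j - 1) j = ∏ m, g m := by
  have h0 : (j - 1 - j).val = n - 1 := by
    rw [show j - 1 - j = -1 by ring, neg_one_val h2]
  unfold W
  rw [h0]
  have hall : (∏ m, g m) = ∏ l ∈ Finset.range n, g (j + (l : Fin n)) := by
    rw [← Fin.prod_univ_eq_prod_range (fun l => g (j + (l : Fin n))) n]
    simp only [Fin.cast_val_eq_self]
    exact (Equiv.prod_comp (Equiv.addLeft j) g).symm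
  have hr : Finset.range n = Finset.range ((n - 1) + 1) := by
    congr 1; omega
  rw [hall, hr, Finset.prod_range_succ, neg_one_cast h2,
    show j + (-1 : Fin n) = j - 1 by ring]
  ring

lemma cycle_right_inv (h2 : 2 ≤ n) (g : Fin n → ℝ) (hP : 1 - ∏ m, g m ≠ 0) :
    (1 - cycleMatrix g) * T g = 1 := by
  ext i j
  rw [Matrix.mul_apply]
  have key : ∀ m : Fin n, (i = m + 1) ↔ (m = i - 1) := by
    intro m
    constructor <;> rintro rfl <;> ring
  simp only [Matrix.sub_apply, Matrix.one_apply, cycleMatrix, Matrix.of_apply]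
  simp only [key, sub_mul, ite_mul, one_mul, zero_mul, Finset.sum_sub_distrib]
  rw [Finset.sum_ite_eq, Finset.sum_ite_eq']
  simp only [Finset.mem_univ, if_true]
  by_cases hij : i = j
  · subst hij
    have hW : W g i i = 1 := by unfold W; simp [sub_self]
    simp only [T, Matrix.of_apply, if_pos rfl, hW]
    have hc := w_cycle g h2 i
    rw [show 1 / (1 - ∏ m, g m) - g (i - 1) * (W g (i - 1) i / (1 - ∏ m, g m))
        = (1 - g (i - 1) * W g (i - 1) i) / (1 - ∏ m, g m) from by ring, hc, div_self hP]
    simp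
  · rw [if_neg hij]
    simp only [T, Matrix.of_apply]
    rw [w_succ g h2 i j hij]
    ring

end CycleAux

open scoped Fin.NatCast Fin.CommRing

open CycleAux in
/-- Contiguous EMP on an `n`-cycle (`n ≥ 4`): nodes `1,…,k` excited (indices `0,…,k-1`),
nodes `k+1,…,n` measured (indices `k,…,n-1`), no node both excited and measured.
The observed submatrix `M = C T B` does not determine the edge weights: there is a
second cycle with nonzero edge weights having the same observed entries but a different
weight on the edge `k → k+1`. -/
theorem contiguous_EMP_not_identifiable {n : ℕ} [NeZero n] (hn : 4 ≤ n)
    (k : ℕ) (hk1 : 2 ≤ k) (hk2 : k ≤ n - 2)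
    (g : Fin n → ℝ) (hg : ∀ i, g i ≠ 0) (hP : 1 - ∏ i, g i ≠ 0) :
    ∃ g' : Fin n → ℝ,
      (∀ i, g' i ≠ 0) ∧ 1 - ∏ i, g' i ≠ 0 ∧
      g' ⟨k - 1, by omega⟩ ≠ g ⟨k - 1, by omega⟩ ∧
      ∀ i j : Fin n, k ≤ i.val → j.val < k →
        (1 - cycleMatrix g')⁻¹ i j = (1 - cycleMatrix g)⁻¹ i j := by
  have h2 : 2 ≤ n := by omega
  set P := ∏ i, g i with hPdef
  have hPne : P ≠ 0 := Finset.prod_ne_zero_iff.mpr (fun i _ => hg i)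
  set lam : ℝ := if P = 1/2 then 3 else 2 with hlam
  have hlam0 : lam ≠ 0 := by rw [hlam]; split_ifs <;> norm_num
  have hlam1 : lam ≠ 1 := by rw [hlam]; split_ifs <;> norm_num
  have hkey : 1 - lam * (1 - P) ≠ 0 := by
    rw [hlam]; split_ifs with h
    · rw [h]; norm_num
    · intro hc; apply h; linarith
  set mu : ℝ := (1 - lam * (1 - P)) / (lam * P) with hmu
  have hmu0 : mu ≠ 0 := div_ne_zero hkey (mul_ne_zero hlam0 hPne)
  set a : Fin n := ⟨k - 1, by omega⟩ with ha
  set b : Fin n := ⟨n - 1, by omega⟩ with hb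
  have hab : a ≠ b := by
    rw [Ne, Fin.ext_iff]
    show ¬(k - 1 = n - 1)
    omega
  set g' : Fin n → ℝ := fun i => (if i = a then lam else 1) * (if i = b then mu else 1) * g i
    with hg'
  have hg'ne : ∀ i, g' i ≠ 0 := by
    intro i
    apply mul_ne_zero (mul_ne_zero _ _) (hg i) <;> split_ifs <;> simp [hlam0, hmu0]
  have hP' : (∏ i, g' i) = 1 - lam * (1 - P) := by
    simp only [hg']
    rw [Finset.prod_mul_distrib, Finset.prod_mul_distrib,
      Finset.prod_ite_eq' Finset.univ a (fun _ => lam),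
      Finset.prod_ite_eq' Finset.univ b (fun _ => mu)]
    simp only [Finset.mem_univ, if_true, ← hPdef]
    rw [hmu]
    field_simp
  have hP'ne : 1 - ∏ i, g' i ≠ 0 := by
    rw [hP']
    have : 1 - (1 - lam * (1 - P)) = lam * (1 - P) := by ring
    rw [this]
    exact mul_ne_zero hlam0 hP
  refine ⟨g', hg'ne, hP'ne, ?_, ?_⟩
  · show g' a ≠ g a
    simp only [hg', if_pos rfl, if_neg hab, mul_one, one_mul, if_true]
    intro hc
    rcases mul_eq_zero.mp (show (lam - 1) * g a = 0 by linear_combination hc) with h | h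
    · exact hlam1 (by linarith)
    · exact hg a h
  · intro i j hi hj
    rw [Matrix.inv_eq_right_inv (cycle_right_inv h2 g' hP'ne),
        Matrix.inv_eq_right_inv (cycle_right_inv h2 g hP)]
    have hjlt : j.val < i.val := by omega
    have hd : (i - j).val = i.val - j.val := by
      rw [Fin.sub_def]
      show (n - j.val + i.val) % n = i.val - j.val
      have hh : n - j.val + i.val = (i.val - j.val) + n := by omega
      rw [hh, Nat.add_mod_right, Nat.mod_eq_of_lt (by omega)]
    have hW : W g' i j = lam * W g i j := by
      unfold W
      rw [hd]
      have step : ∀ l ∈ Finset.range (i.val - j.val),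
          g' (j + (l : Fin n)) = (if l = k - 1 - j.val then lam else 1) * g (j + (l : Fin n)) := by
        intro l hl
        simp only [Finset.mem_range] at hl
        have hval : (j + (l : Fin n)).val = j.val + l := by
          have hl' : ((l : Fin n)).val = l := by
            rw [Fin.val_natCast, Nat.mod_eq_of_lt (by omega)]
          rw [Fin.add_def]
          show (j.val + ((l : Fin n)).val) % n = j.val + l
          rw [hl', Nat.mod_eq_of_lt (by omega)]
        have hbne : (j + (l : Fin n)) ≠ b := by
          rw [Ne, Fin.ext_iff, hval]
          show ¬(j.val + l = n - 1)
          omega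
        have haiff : ((j + (l : Fin n)) = a) ↔ (l = k - 1 - j.val) := by
          rw [Fin.ext_iff, hval]
          show j.val + l = k - 1 ↔ l = k - 1 - j.val
          omega
        simp only [hg', if_neg hbne, mul_one]
        by_cases hla : l = k - 1 - j.val
        · rw [if_pos (haiff.mpr hla), if_pos hla]
        · rw [if_neg (fun h => hla (haiff.mp h)), if_neg hla]
      rw [Finset.prod_congr rfl step, Finset.prod_mul_distrib,
        Finset.prod_ite_eq' _ (k - 1 - j.val) (fun _ => lam)]
      rw [if_pos (Finset.mem_range.mpr (by omega))]
    simp only [T, Matrix.of_apply, hW, hP', ← hPdef, sub_sub_cancel]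
    rw [mul_div_mul_left _ _ hlam0]
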